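/- arXiv:1911.09366 — 4 statements merged into one kernel-verified Lean document; each statement's English description precedes it below -/
import Mathlib

section
/- Â₁² + Â₂² = b·(J_n − I_n), where J_n is the n×n all-ones matrix. -/
open Matrix Kronecker Quaternion

/-- The permutation matrix of the 4-cycle (1,2,3,4). -/
def xD : Matrix (Fin 4) (Fin 4) ℚ := !![0,1,0,0; 0,0,1,0; 0,0,0,1; 1,0,0,0]

/-- The permutation matrix of (1,2)(3,4). -/
def yD : Matrix (Fin 4) (Fin 4) ℚ := !![0,1,0,0; 1,0,0,0; 0,0,0,1; 0,0,1,0]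

/-- `Â₁ := fromBlocks 0 𝟙 0 A₁` (all-ones row in the upper-right block). -/
def Ahat1 {n : ℕ} (A : Matrix (Fin (n - 1)) (Fin (n - 1)) ℚ) :
    Matrix (Fin 1 ⊕ Fin (n - 1)) (Fin 1 ⊕ Fin (n - 1)) ℚ :=
  Matrix.fromBlocks 0 (Matrix.of fun _ _ => 1) 0 A

/-- `Â₂ := fromBlocks 0 0 𝟙 A₂` (all-ones column in the lower-left block). -/
def Ahat2 {n : ℕ} (A : Matrix (Fin (n - 1)) (Fin (n - 1)) ℚ) :
    Matrix (Fin 1 ⊕ Fin (n - 1)) (Fin 1 ⊕ Fin (n - 1)) ℚ :=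
  Matrix.fromBlocks 0 0 (Matrix.of fun _ _ => 1) A

/-- `σ_k := I_n ⊗ k`. -/
def sig (n : ℕ) (k : Matrix (Fin 4) (Fin 4) ℚ) :
    Matrix ((Fin 1 ⊕ Fin (n - 1)) × Fin 4) ((Fin 1 ⊕ Fin (n - 1)) × Fin 4) ℚ :=
  (1 : Matrix (Fin 1 ⊕ Fin (n - 1)) (Fin 1 ⊕ Fin (n - 1)) ℚ) ⊗ₖ k

/-- `τ_g := Â₁ ⊗ g + Â₂ ⊗ (g·x²)`. -/
def tau {n : ℕ} (A₁ : Matrix (Fin (n - 1)) (Fin (n - 1)) ℚ) (g : Matrix (Fin 4) (Fin 4) ℚ) :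
    Matrix ((Fin 1 ⊕ Fin (n - 1)) × Fin 4) ((Fin 1 ⊕ Fin (n - 1)) × Fin 4) ℚ :=
  Ahat1 A₁ ⊗ₖ g + Ahat2 A₁ᵀ ⊗ₖ (g * xD ^ 2)

theorem stmt_10 (n : ℕ) (hn : 4 ≤ n) (a b : ℚ)
    (ha : a = (n : ℚ) - 1) (hb : b = ((n : ℚ) - 2) / 2)
    (A₁ : Matrix (Fin (n - 1)) (Fin (n - 1)) ℚ)
    (h01 : ∀ i j, A₁ i j = 0 ∨ A₁ i j = 1)
    (hdiag : ∀ i, A₁ i i = 0)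
    (hns : A₁ ≠ A₁ᵀ)
    (hsum : A₁ + A₁ᵀ = (Matrix.of fun _ _ => (1 : ℚ)) - 1)
    (hrow : ∀ i, ∑ j, A₁ i j = b)
    (h11 : A₁ * A₁ = ((b - 1) / 2) • A₁ + ((b + 1) / 2) • A₁ᵀ)
    (h22 : A₁ᵀ * A₁ᵀ = ((b + 1) / 2) • A₁ + ((b - 1) / 2) • A₁ᵀ)
    (h12 : A₁ * A₁ᵀ = b • (1 : Matrix (Fin (n - 1)) (Fin (n - 1)) ℚ)
      + ((b - 1) / 2) • A₁ + ((b - 1) / 2) • A₁ᵀ)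
    (h21 : A₁ᵀ * A₁ = b • (1 : Matrix (Fin (n - 1)) (Fin (n - 1)) ℚ)
      + ((b - 1) / 2) • A₁ + ((b - 1) / 2) • A₁ᵀ) :
    Ahat1 A₁ * Ahat1 A₁ + Ahat2 A₁ᵀ * Ahat2 A₁ᵀ
      = b • ((Matrix.of fun _ _ => 1) - (1 : Matrix (Fin 1 ⊕ Fin (n - 1)) (Fin 1 ⊕ Fin (n - 1)) ℚ)) := by
  have h1n : 1 ≤ n := by omega
  have hcard : ((n - 1 : ℕ) : ℚ) = (n:ℚ) - 1 := by
    push_cast [Nat.cast_sub h1n]; ring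
  have hb2 : b + b = (n:ℚ) - 2 := by rw [hb]; ring
  have hcol : ∀ j, ∑ i, A₁ i j = b := by
    intro j
    have h : ∀ i, A₁ i j + A₁ j i = (Matrix.of fun _ _ => (1:ℚ)) i j - (1 : Matrix (Fin (n-1)) (Fin (n-1)) ℚ) i j := by
      intro i
      have := congrFun (congrFun hsum i) j
      simpa [Matrix.transpose_apply] using this
    have hs : ∑ i, (A₁ i j + A₁ j i) = ((n:ℚ) - 1) - 1 := by
      rw [Finset.sum_congr rfl fun i _ => h i]
      rw [Finset.sum_sub_distrib]
      simp [Matrix.one_apply, Finset.sum_ite_eq, hcard]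
    rw [Finset.sum_add_distrib, hrow j] at hs
    linarith
  ext i j
  rcases i with i | i <;> rcases j with j | j <;>
    simp [Ahat1, Ahat2, Matrix.mul_apply, Fintype.sum_sum_type, Matrix.fromBlocks,
      Matrix.one_apply, Matrix.sub_apply, Matrix.smul_apply]
  · right; simp [Subsingleton.elim i j]
  · exact hcol j
  · exact hcol i
  · have h1 := congrFun (congrFun h11 i) j
    have h2 := congrFun (congrFun h22 i) j
    have h3 := congrFun (congrFun hsum i) j
    simp only [Matrix.mul_apply, Matrix.add_apply, Matrix.smul_apply, Matrix.transpose_apply,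
      Matrix.sub_apply, Matrix.one_apply, Matrix.of_apply, smul_eq_mul] at h1 h2 h3
    rw [h1, h2]
    linear_combination b * h3
end

section
/- Â₁·Â₂ + Â₂·Â₁ = b·J_n + (a−b)·I_n, where J_n is the n×n all-ones matrix. -/
open Matrix Kronecker Quaternion

theorem stmt_11 (n : ℕ) (hn : 4 ≤ n) (a b : ℚ)
    (ha : a = (n : ℚ) - 1) (hb : b = ((n : ℚ) - 2) / 2)
    (A₁ : Matrix (Fin (n - 1)) (Fin (n - 1)) ℚ)
    (h01 : ∀ i j, A₁ i j = 0 ∨ A₁ i j = 1)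
    (hdiag : ∀ i, A₁ i i = 0)
    (hns : A₁ ≠ A₁ᵀ)
    (hsum : A₁ + A₁ᵀ = (Matrix.of fun _ _ => (1 : ℚ)) - 1)
    (hrow : ∀ i, ∑ j, A₁ i j = b)
    (h11 : A₁ * A₁ = ((b - 1) / 2) • A₁ + ((b + 1) / 2) • A₁ᵀ)
    (h22 : A₁ᵀ * A₁ᵀ = ((b + 1) / 2) • A₁ + ((b - 1) / 2) • A₁ᵀ)
    (h12 : A₁ * A₁ᵀ = b • (1 : Matrix (Fin (n - 1)) (Fin (n - 1)) ℚ)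
      + ((b - 1) / 2) • A₁ + ((b - 1) / 2) • A₁ᵀ)
    (h21 : A₁ᵀ * A₁ = b • (1 : Matrix (Fin (n - 1)) (Fin (n - 1)) ℚ)
      + ((b - 1) / 2) • A₁ + ((b - 1) / 2) • A₁ᵀ) :
    Ahat1 A₁ * Ahat2 A₁ᵀ + Ahat2 A₁ᵀ * Ahat1 A₁
      = b • (Matrix.of fun _ _ => 1)
        + (a - b) • (1 : Matrix (Fin 1 ⊕ Fin (n - 1)) (Fin 1 ⊕ Fin (n - 1)) ℚ) := by
  have hcast : ((n - 1 : ℕ) : ℚ) = (n : ℚ) - 1 := by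
    rw [Nat.cast_sub (by omega)]; norm_num
  have hcol : ∀ j, ∑ k, A₁ k j = b := by
    intro j
    have hp : ∀ k, A₁ k j = 1 - (if j = k then (1:ℚ) else 0) - A₁ j k := by
      intro k
      have := congrFun (congrFun hsum j) k
      simp only [Matrix.add_apply, Matrix.transpose_apply, Matrix.sub_apply,
        Matrix.of_apply, Matrix.one_apply] at this
      linarith
    calc ∑ k, A₁ k j = ∑ k, (1 - (if j = k then (1:ℚ) else 0) - A₁ j k) :=
          Finset.sum_congr rfl (fun k _ => hp k)
      _ = b := by
          simp only [Finset.sum_sub_distrib, Finset.sum_const, Finset.card_univ,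
            Fintype.card_fin, nsmul_eq_mul, mul_one, Finset.sum_ite_eq, Finset.mem_univ,
            if_true, hrow j, hcast, hb]
          ring
  ext i j
  rcases i with i | i <;> rcases j with j | j <;>
    simp only [Ahat1, Ahat2, Matrix.add_apply, Matrix.mul_apply, Matrix.fromBlocks,
      Matrix.of_apply, Sum.elim_inl, Sum.elim_inr, Fintype.sum_sum_type,
      Matrix.smul_apply, Matrix.one_apply, Matrix.zero_apply, smul_eq_mul]
  · simp only [mul_one, one_mul, mul_zero, zero_mul, Finset.sum_const, Finset.card_univ,
      Fintype.card_fin, nsmul_eq_mul, hcast, Sum.inl.injEq]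
    have : i = j := Subsingleton.elim i j
    simp only [this, eq_self_iff_true, if_true, ha]
    ring
  · simp only [mul_one, one_mul, mul_zero, zero_mul, Finset.sum_const, add_zero, zero_add]
    have := hcol j
    simp_all
  · simp only [mul_one, one_mul, mul_zero, zero_mul, Finset.sum_const, add_zero, zero_add]
    have := hrow i
    simp_all
  · have e12 := congrFun (congrFun h12 i) j
    have e21 := congrFun (congrFun h21 i) j
    have es := congrFun (congrFun hsum i) j
    simp only [Matrix.mul_apply, Matrix.add_apply, Matrix.sub_apply, Matrix.smul_apply,
      Matrix.one_apply, Matrix.of_apply, Matrix.transpose_apply, smul_eq_mul] at e12 e21 es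
    simp only [mul_one, one_mul, mul_zero, zero_mul, Finset.sum_const, Finset.card_univ,
      Fintype.card_fin, Matrix.transpose_apply, Finset.univ_unique, Finset.sum_singleton,
      Sum.inr.injEq]
    rw [e12, e21]
    by_cases hij : i = j
    · subst hij
      simp only [eq_self_iff_true, if_true, hdiag, Finset.card_singleton,
        Nat.cast_one, ha, hb]
      ring
    · simp only [if_neg hij, hij, if_false, Finset.card_singleton, Nat.cast_one] at es ⊢
      rw [ha, hb]
      linear_combination (((n:ℚ) - 2) / 2 - 1) * es
end

section
/- For all g, g' ∈ G∖K, τ_g·τ_{g'} = a·σ_{g·g'·x²} + b·τ_{g·g'·x·y} + b·τ_{g·g'·x³·y} (note g·g'·x² ∈ K and g·g'·x·y, g·g'·x³·y ∈ G∖K). -/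
open Matrix Kronecker Quaternion

lemma F2 : xD ^ 4 = 1 := by
  ext i j
  fin_cases i <;> fin_cases j <;>
    simp [xD, pow_succ, Matrix.mul_apply, Fin.sum_univ_four, Matrix.one_apply,
      Matrix.vecHead, Matrix.vecTail]

lemma Fcen : yD * xD ^ 2 = xD ^ 2 * yD := by
  ext i j
  fin_cases i <;> fin_cases j <;>
    simp [xD, yD, pow_succ, Matrix.mul_apply, Fin.sum_univ_four,
      Matrix.vecHead, Matrix.vecTail]

lemma F3 : (1 : Matrix (Fin 4) (Fin 4) ℚ) + xD ^ 2 = xD * yD + xD ^ 3 * yD := by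
  ext i j
  fin_cases i <;> fin_cases j <;>
    simp [xD, yD, pow_succ, Matrix.mul_apply, Fin.sum_univ_four, Matrix.one_apply,
      Matrix.vecHead, Matrix.vecTail]

lemma hcol {n : ℕ} (hn : 4 ≤ n) (b : ℚ) (hb : b = ((n : ℚ) - 2) / 2)
    (A₁ : Matrix (Fin (n - 1)) (Fin (n - 1)) ℚ)
    (hsum : A₁ + A₁ᵀ = (Matrix.of fun _ _ => (1 : ℚ)) - 1)
    (hrow : ∀ i, ∑ j, A₁ i j = b) (j : Fin (n - 1)) : ∑ i, A₁ i j = b := by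
  have h := congrArg (fun M => ∑ k, M j k) hsum
  simp only [Matrix.add_apply, Matrix.sub_apply, Matrix.of_apply,
    Matrix.transpose_apply, Matrix.one_apply, Finset.sum_add_distrib,
    Finset.sum_sub_distrib] at h
  rw [hrow j] at h
  simp [Finset.sum_ite_eq] at h
  have hc : ((n - 1 : ℕ) : ℚ) = 2 * b + 1 := by
    have h1 : 1 ≤ n := by omega
    push_cast [h1]
    rw [hb]; ring
  rw [hc] at h
  linarith

lemma S1lem {n : ℕ} (hn : 4 ≤ n) (b : ℚ) (hb : b = ((n : ℚ) - 2) / 2)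
    (A₁ : Matrix (Fin (n - 1)) (Fin (n - 1)) ℚ)
    (hsum : A₁ + A₁ᵀ = (Matrix.of fun _ _ => (1 : ℚ)) - 1)
    (hrow : ∀ i, ∑ j, A₁ i j = b)
    (h11 : A₁ * A₁ = ((b - 1) / 2) • A₁ + ((b + 1) / 2) • A₁ᵀ)
    (h22 : A₁ᵀ * A₁ᵀ = ((b + 1) / 2) • A₁ + ((b - 1) / 2) • A₁ᵀ) :
    Ahat1 A₁ * Ahat1 A₁ + Ahat2 A₁ᵀ * Ahat2 A₁ᵀ = b • (Ahat1 A₁ + Ahat2 A₁ᵀ) := by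
  unfold Ahat1 Ahat2
  rw [Matrix.fromBlocks_multiply, Matrix.fromBlocks_multiply, Matrix.fromBlocks_add,
    Matrix.fromBlocks_add, Matrix.fromBlocks_smul, Matrix.fromBlocks_inj]
  refine ⟨by simp, ?_, ?_, ?_⟩
  · -- top-right : J₁ * A₁ = b • J₁  (plus zeros)
    simp only [Matrix.zero_mul, Matrix.mul_zero, add_zero, zero_add, smul_zero]
    ext i k
    simp [Matrix.mul_apply, Matrix.smul_apply]
    exact hcol hn b hb A₁ hsum hrow k
  · -- bottom-left : A₁ᵀ * J₂ = b • J₂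
    simp only [Matrix.zero_mul, Matrix.mul_zero, add_zero, zero_add, smul_zero]
    ext i k
    simp [Matrix.mul_apply, Matrix.smul_apply]
    exact hcol hn b hb A₁ hsum hrow i
  · simp only [Matrix.zero_mul, Matrix.mul_zero, add_zero, zero_add]
    rw [h11, h22]
    module

lemma S2lem {n : ℕ} (hn : 4 ≤ n) (a b : ℚ)
    (ha : a = (n : ℚ) - 1) (hb : b = ((n : ℚ) - 2) / 2)
    (A₁ : Matrix (Fin (n - 1)) (Fin (n - 1)) ℚ)
    (hsum : A₁ + A₁ᵀ = (Matrix.of fun _ _ => (1 : ℚ)) - 1)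
    (hrow : ∀ i, ∑ j, A₁ i j = b)
    (h12 : A₁ * A₁ᵀ = b • (1 : Matrix (Fin (n - 1)) (Fin (n - 1)) ℚ)
      + ((b - 1) / 2) • A₁ + ((b - 1) / 2) • A₁ᵀ)
    (h21 : A₁ᵀ * A₁ = b • (1 : Matrix (Fin (n - 1)) (Fin (n - 1)) ℚ)
      + ((b - 1) / 2) • A₁ + ((b - 1) / 2) • A₁ᵀ) :
    Ahat1 A₁ * Ahat2 A₁ᵀ + Ahat2 A₁ᵀ * Ahat1 A₁
      = a • (1 : Matrix (Fin 1 ⊕ Fin (n - 1)) (Fin 1 ⊕ Fin (n - 1)) ℚ)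
        + b • (Ahat1 A₁ + Ahat2 A₁ᵀ) := by
  have hab : a = 2 * b + 1 := by rw [ha, hb]; ring
  unfold Ahat1 Ahat2
  rw [← Matrix.fromBlocks_one, Matrix.fromBlocks_multiply, Matrix.fromBlocks_multiply,
    Matrix.fromBlocks_add, Matrix.fromBlocks_add, Matrix.fromBlocks_smul,
    Matrix.fromBlocks_smul, Matrix.fromBlocks_add, Matrix.fromBlocks_inj]
  refine ⟨?_, ?_, ?_, ?_⟩
  · -- top-left : J₁ * J₂ = a • 1
    simp only [Matrix.zero_mul, Matrix.mul_zero, add_zero, zero_add, smul_zero]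
    ext i k
    fin_cases i; fin_cases k
    simp [Matrix.mul_apply, Matrix.smul_apply, Matrix.one_apply, Finset.card_univ]
    rw [ha]
    have h1 : 1 ≤ n := by omega
    push_cast [h1]
    ring
  · -- top-right : J₁ * A₁ᵀ = b • J₁
    simp only [Matrix.zero_mul, Matrix.mul_zero, add_zero, zero_add, smul_zero]
    ext i k
    simp [Matrix.mul_apply, Matrix.smul_apply]
    exact hrow k
  · -- bottom-left : A₁ * J₂ = b • J₂
    simp only [Matrix.zero_mul, Matrix.mul_zero, add_zero, zero_add, smul_zero]
    ext i k
    simp [Matrix.mul_apply, Matrix.smul_apply]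
    exact hrow i
  · -- bottom-right
    simp only [Matrix.zero_mul, Matrix.mul_zero, add_zero, zero_add]
    have hJ : ((Matrix.of fun _ _ => (1:ℚ)) : Matrix (Fin (n-1)) (Fin 1) ℚ)
        * ((Matrix.of fun _ _ => (1:ℚ)) : Matrix (Fin 1) (Fin (n-1)) ℚ)
        = A₁ + A₁ᵀ + 1 := by
      rw [hsum, sub_add_cancel]
      ext i k
      simp [Matrix.mul_apply]
    rw [hJ, h12, h21, hab]
    module

lemma key {n : ℕ} (a b : ℚ) (A₁ : Matrix (Fin (n - 1)) (Fin (n - 1)) ℚ)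
    (S1 : Ahat1 A₁ * Ahat1 A₁ + Ahat2 A₁ᵀ * Ahat2 A₁ᵀ = b • (Ahat1 A₁ + Ahat2 A₁ᵀ))
    (S2 : Ahat1 A₁ * Ahat2 A₁ᵀ + Ahat2 A₁ᵀ * Ahat1 A₁
      = a • (1 : Matrix (Fin 1 ⊕ Fin (n - 1)) (Fin 1 ⊕ Fin (n - 1)) ℚ) + b • (Ahat1 A₁ + Ahat2 A₁ᵀ))
    (g g' : Matrix (Fin 4) (Fin 4) ℚ) (hcen : xD ^ 2 * g' = g' * xD ^ 2) :
    tau A₁ g * tau A₁ g' = a • sig n (g * g' * xD ^ 2)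
      + b • tau A₁ (g * g' * xD * yD) + b • tau A₁ (g * g' * xD ^ 3 * yD) := by
  have e2 : g * xD ^ 2 * g' = g * g' * xD ^ 2 := by
    rw [mul_assoc, hcen, ← mul_assoc]
  have e3 : g * xD ^ 2 * (g' * xD ^ 2) = g * g' := by
    rw [mul_assoc, ← mul_assoc (xD ^ 2), hcen, mul_assoc g', ← pow_add, ← mul_assoc]
    norm_num [F2]
  have e4 : g * g' * xD * yD * xD ^ 2 = g * g' * xD ^ 3 * yD := by
    rw [mul_assoc (g * g' * xD), Fcen, ← mul_assoc, mul_assoc (g * g'), ← pow_succ']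
  have e5 : g * g' * xD ^ 3 * yD * xD ^ 2 = g * g' * xD * yD := by
    rw [mul_assoc (g * g' * xD ^ 3), Fcen, ← mul_assoc, mul_assoc (g * g'), ← pow_add]
    norm_num
    rw [show (5:ℕ) = 4 + 1 from rfl, pow_succ, F2, one_mul]
  have e6 : g * g' + g * g' * xD ^ 2 = g * g' * xD * yD + g * g' * xD ^ 3 * yD := by
    have h := congrArg (fun m => g * g' * m) F3
    simpa [mul_add, mul_one, ← mul_assoc] using h
  set G1 := Ahat1 A₁ with hG1
  set G2 := Ahat2 A₁ᵀ with hG2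
  calc tau A₁ g * tau A₁ g'
      = (G1 * G1 + G2 * G2) ⊗ₖ (g * g') + (G1 * G2 + G2 * G1) ⊗ₖ (g * g' * xD ^ 2) := by
        simp only [tau, add_mul, mul_add, ← mul_kronecker_mul]
        rw [e3, ← mul_assoc g g' (xD ^ 2), e2]
        simp only [add_kronecker]
        abel
    _ = b • ((G1 + G2) ⊗ₖ (g * g' + g * g' * xD ^ 2))
        + a • ((1 : Matrix (Fin 1 ⊕ Fin (n - 1)) (Fin 1 ⊕ Fin (n - 1)) ℚ) ⊗ₖ (g * g' * xD ^ 2)) := by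
        rw [S1, S2]
        simp only [smul_kronecker, add_kronecker, kronecker_add, smul_add]
        abel
    _ = b • ((G1 + G2) ⊗ₖ (g * g' * xD * yD + g * g' * xD ^ 3 * yD))
        + a • ((1 : Matrix (Fin 1 ⊕ Fin (n - 1)) (Fin 1 ⊕ Fin (n - 1)) ℚ) ⊗ₖ (g * g' * xD ^ 2)) := by
        rw [e6]
    _ = _ := by
        simp only [sig, tau, e4, e5, add_kronecker, kronecker_add, smul_add]
        abel

theorem stmt_14 (n : ℕ) (hn : 4 ≤ n) (a b : ℚ)
    (ha : a = (n : ℚ) - 1) (hb : b = ((n : ℚ) - 2) / 2)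
    (A₁ : Matrix (Fin (n - 1)) (Fin (n - 1)) ℚ)
    (h01 : ∀ i j, A₁ i j = 0 ∨ A₁ i j = 1)
    (hdiag : ∀ i, A₁ i i = 0)
    (hns : A₁ ≠ A₁ᵀ)
    (hsum : A₁ + A₁ᵀ = (Matrix.of fun _ _ => (1 : ℚ)) - 1)
    (hrow : ∀ i, ∑ j, A₁ i j = b)
    (h11 : A₁ * A₁ = ((b - 1) / 2) • A₁ + ((b + 1) / 2) • A₁ᵀ)
    (h22 : A₁ᵀ * A₁ᵀ = ((b + 1) / 2) • A₁ + ((b - 1) / 2) • A₁ᵀ)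
    (h12 : A₁ * A₁ᵀ = b • (1 : Matrix (Fin (n - 1)) (Fin (n - 1)) ℚ)
      + ((b - 1) / 2) • A₁ + ((b - 1) / 2) • A₁ᵀ)
    (h21 : A₁ᵀ * A₁ = b • (1 : Matrix (Fin (n - 1)) (Fin (n - 1)) ℚ)
      + ((b - 1) / 2) • A₁ + ((b - 1) / 2) • A₁ᵀ) :
    ∀ g ∈ ({yD, xD * yD, xD ^ 2 * yD, xD ^ 3 * yD} : Set (Matrix (Fin 4) (Fin 4) ℚ)),
      ∀ g' ∈ ({yD, xD * yD, xD ^ 2 * yD, xD ^ 3 * yD} : Set (Matrix (Fin 4) (Fin 4) ℚ)),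
      tau A₁ g * tau A₁ g' = a • sig n (g * g' * xD ^ 2)
        + b • tau A₁ (g * g' * xD * yD) + b • tau A₁ (g * g' * xD ^ 3 * yD) := by
  intro g hg g' hg'
  have S1 := S1lem hn b hb A₁ hsum hrow h11 h22
  have S2 := S2lem hn a b ha hb A₁ hsum hrow h12 h21
  have hcen : xD ^ 2 * g' = g' * xD ^ 2 := by
    have hrep : ∃ j : ℕ, g' = xD ^ j * yD := by
      simp only [Set.mem_insert_iff, Set.mem_singleton_iff] at hg'
      rcases hg' with rfl | rfl | rfl | rfl
      exacts [⟨0, by rw [pow_zero, one_mul]⟩, ⟨1, by rw [pow_one]⟩, ⟨2, rfl⟩, ⟨3, rfl⟩]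
    obtain ⟨j, rfl⟩ := hrep
    rw [← mul_assoc, ← pow_add, Nat.add_comm 2 j, pow_add, mul_assoc, ← Fcen, ← mul_assoc]
  exact key a b A₁ S1 S2 g g' hcen
end

section
/- There is a surjective ℂ-algebra homomorphism T' from the ℂ-subalgebra of 4n×4n complex matrices spanned by the eight matrices σ_1, σ_x, σ_{x²}, σ_{x³}, τ_y, τ_{xy}, τ_{x²y}, τ_{x³y} (regarded as complex matrices) onto M₂(ℂ) satisfying T'(σ_1) = I₂, T'(σ_x) = [[i,0],[0,−i]] (i = √−1), and T'(τ_y) = [[0,−1],[a,0]] (this is the irreducible 2-dimensional representation of 𝒬). -/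
open Matrix Kronecker Quaternion

noncomputable section St17Aux
namespace St17
open Complex

def ee : Fin 4 → ℂ := ![1, I, -1, -I]
def eb : Fin 4 → ℂ := ![I, 1, -I, -1]
def ff : Fin 4 → ℂ := ![1/4, -I/4, -1/4, I/4]
def fb : Fin 4 → ℂ := ![-I/4, 1/4, I/4, -1/4]

def u1 (m : ℕ) : Fin 1 ⊕ Fin m → ℂ := Sum.elim (fun _ => 1) (fun _ => 0)
def u2 (m : ℕ) (a : ℂ) : Fin 1 ⊕ Fin m → ℂ := Sum.elim (fun _ => 0) (fun _ => -a⁻¹)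

def Vm (m : ℕ) (a : ℂ) : Matrix ((Fin 1 ⊕ Fin m) × Fin 4) (Fin 2) ℂ :=
  Matrix.of fun pk c => ![u1 m pk.1 * ee pk.2, u2 m a pk.1 * eb pk.2] c

def Wm (m : ℕ) (a : ℂ) (j0 : Fin m) : Matrix (Fin 2) ((Fin 1 ⊕ Fin m) × Fin 4) ℂ :=
  Matrix.of fun c pk =>
    ![Sum.elim (fun _ => (1:ℂ)) (fun _ => 0) pk.1 * ff pk.2,
      (if pk.1 = Sum.inr j0 then -a else 0) * fb pk.2] c

lemma kron_mulVec {I J : Type*} [Fintype I] [Fintype J] (P : Matrix I I ℂ) (Q : Matrix J J ℂ)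
    (u : I → ℂ) (w : J → ℂ) :
    (P ⊗ₖ Q) *ᵥ (fun ql => u ql.1 * w ql.2) = fun pk => (P *ᵥ u) pk.1 * (Q *ᵥ w) pk.2 := by
  funext pk
  simp only [mulVec, dotProduct, Fintype.sum_prod_type, Finset.sum_mul_sum, kroneckerMap_apply]
  exact Finset.sum_congr rfl fun q _ => Finset.sum_congr rfl fun l _ => by ring

lemma mul_eq_of_cols {N : Type*} [Fintype N] (M : Matrix N N ℂ) (V : Matrix N (Fin 2) ℂ)
    (ρ : Matrix (Fin 2) (Fin 2) ℂ)
    (h0 : M *ᵥ (fun p => V p 0) = fun p => V p 0 * ρ 0 0 + V p 1 * ρ 1 0)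
    (h1 : M *ᵥ (fun p => V p 1) = fun p => V p 0 * ρ 0 1 + V p 1 * ρ 1 1) :
    M * V = V * ρ := by
  ext p c
  fin_cases c
  · simpa [mul_apply, mulVec, dotProduct, Fin.sum_univ_two] using congrFun h0 p
  · simpa [mul_apply, mulVec, dotProduct, Fin.sum_univ_two] using congrFun h1 p

lemma map_kron {I J : Type*} (P : Matrix I I ℚ) (Q : Matrix J J ℚ) :
    (P ⊗ₖ Q).map ((↑·) : ℚ → ℂ) = (P.map ((↑·) : ℚ → ℂ)) ⊗ₖ (Q.map ((↑·) : ℚ → ℂ)) := by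
  ext pk ql
  simp [kroneckerMap_apply, Matrix.map_apply]

lemma mapc_mul {m : Type*} [Fintype m] [DecidableEq m] (P Q : Matrix m m ℚ) :
    (P * Q).map ((↑·) : ℚ → ℂ) = P.map ((↑·) : ℚ → ℂ) * Q.map ((↑·) : ℚ → ℂ) := by
  have h : ((↑·) : ℚ → ℂ) = ⇑(Rat.castHom ℂ) := rfl
  rw [h, Matrix.map_mul]

lemma WV (m : ℕ) (a : ℂ) (ha : a ≠ 0) (j0 : Fin m) : Wm m a j0 * Vm m a = 1 := by
  ext c d
  rw [mul_apply]
  rw [Fintype.sum_prod_type]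
  rw [Fintype.sum_sum_type]
  fin_cases c <;> fin_cases d <;>
    simp [Wm, Vm, u1, u2, ee, eb, ff, fb, Fin.sum_univ_four, Finset.sum_ite_eq',
      Matrix.one_apply, ite_mul, Finset.mul_sum]
  all_goals field_simp
  all_goals ring_nf
  all_goals simp [Complex.I_sq]
  all_goals ring_nf
  all_goals rw [← mul_pow, mul_inv_cancel₀ ha, one_pow]

lemma buildHom {N : Type*} [Fintype N] [DecidableEq N]
    (S : Set (Matrix N N ℂ))
    (V : Matrix N (Fin 2) ℂ) (W : Matrix (Fin 2) N ℂ)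
    (hWV : W * V = 1)
    (hS : ∀ M ∈ S, ∃ ρ : Matrix (Fin 2) (Fin 2) ℂ, M * V = V * ρ) :
    ∃ T : Algebra.adjoin ℂ S →ₐ[ℂ] Matrix (Fin 2) (Fin 2) ℂ,
      ∀ u : Algebra.adjoin ℂ S, T u = W * (u : Matrix N N ℂ) * V := by
  have stab : ∀ M ∈ Algebra.adjoin ℂ S, M * V = V * (W * M * V) := by
    intro M hM
    induction hM using Algebra.adjoin_induction with
    | mem x hx =>
        obtain ⟨ρ, hρ⟩ := hS x hx
        have h2 : W * x * V = ρ := by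
          rw [Matrix.mul_assoc, hρ, ← Matrix.mul_assoc, hWV, Matrix.one_mul]
        rw [h2, hρ]
    | algebraMap r =>
        simp only [Algebra.algebraMap_eq_smul_one, Matrix.smul_mul, Matrix.mul_smul,
          Matrix.one_mul, Matrix.mul_one, hWV]
    | add x y hx hy ihx ihy =>
        simp only [Matrix.add_mul, Matrix.mul_add, ihx, ihy]
    | mul x y hx hy ihx ihy =>
        have h1 : x * y * V = V * ((W * x * V) * (W * y * V)) := by
          rw [Matrix.mul_assoc x y V, ihy, ← Matrix.mul_assoc, ihx, Matrix.mul_assoc]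
        have h2 : W * (x * y) * V = (W * x * V) * (W * y * V) := by
          rw [Matrix.mul_assoc W (x*y) V, h1, ← Matrix.mul_assoc W V, hWV, Matrix.one_mul]
        rw [h2, h1]
  refine ⟨{ toFun := fun u => W * (u : Matrix N N ℂ) * V,
            map_one' := ?_, map_mul' := ?_, map_zero' := ?_, map_add' := ?_,
            commutes' := ?_ }, fun u => rfl⟩
  · simp [hWV]
  · intro u v
    show W * ((u : Matrix N N ℂ) * (v : Matrix N N ℂ)) * V =
      (W * (u : Matrix N N ℂ) * V) * (W * (v : Matrix N N ℂ) * V)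
    conv_lhs => rw [← Matrix.mul_assoc, Matrix.mul_assoc (W * (u : Matrix N N ℂ)),
      stab _ v.2, ← Matrix.mul_assoc]
  · simp
  · intro u v
    show W * ((u : Matrix N N ℂ) + (v : Matrix N N ℂ)) * V = _
    rw [Matrix.mul_add, Matrix.add_mul]
  · intro r
    show W * (algebraMap ℂ (Matrix N N ℂ) r) * V = _
    simp only [Algebra.algebraMap_eq_smul_one, Matrix.smul_mul, Matrix.mul_smul,
      Matrix.one_mul, Matrix.mul_one, hWV]

section Blocks
variable {n : ℕ} (A : Matrix (Fin (n - 1)) (Fin (n - 1)) ℚ)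

lemma A1u1 : (Ahat1 A).map ((↑·) : ℚ → ℂ) *ᵥ u1 (n-1) = 0 := by
  funext p
  rcases p with p | p <;>
    simp [Ahat1, u1, mulVec, dotProduct, Fintype.sum_sum_type, Matrix.map_apply]

lemma A2u1 : (Ahat2 A).map ((↑·) : ℚ → ℂ) *ᵥ u1 (n-1) = Sum.elim (fun _ => 0) (fun _ => 1) := by
  funext p
  rcases p with p | p <;>
    simp [Ahat2, u1, mulVec, dotProduct, Fintype.sum_sum_type, Matrix.map_apply]

lemma A1u2 (ac bc : ℂ) (hcard : ((n - 1 : ℕ) : ℂ) = ac)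
    (hA : ∀ i, (∑ j, ((A i j : ℚ) : ℂ)) = bc) :
    (Ahat1 A).map ((↑·) : ℚ → ℂ) *ᵥ u2 (n-1) ac
      = Sum.elim (fun _ => -(ac * ac⁻¹)) (fun _ => -(bc * ac⁻¹)) := by
  funext p
  rcases p with p | p <;>
    simp [Ahat1, u2, mulVec, dotProduct, Fintype.sum_sum_type, Matrix.map_apply,
      Finset.sum_mul, ← Finset.mul_sum, hcard, hA, mul_comm]

lemma A2u2 (ac bc : ℂ)
    (hA : ∀ i, (∑ j, ((A i j : ℚ) : ℂ)) = bc) :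
    (Ahat2 A).map ((↑·) : ℚ → ℂ) *ᵥ u2 (n-1) ac
      = Sum.elim (fun _ => 0) (fun _ => -(bc * ac⁻¹)) := by
  funext p
  rcases p with p | p <;>
    simp [Ahat2, u2, mulVec, dotProduct, Fintype.sum_sum_type, Matrix.map_apply,
      Finset.sum_mul, ← Finset.mul_sum, hA, mul_comm]

end Blocks

lemma sig_rel {m : ℕ} (a α β : ℂ) (Q : Matrix (Fin 4) (Fin 4) ℂ)
    (hQe : Q *ᵥ ee = α • ee) (hQb : Q *ᵥ eb = β • eb) :
    ((1 : Matrix (Fin 1 ⊕ Fin m) (Fin 1 ⊕ Fin m) ℂ) ⊗ₖ Q) * Vm m a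
      = Vm m a * !![α, 0; 0, β] := by
  apply mul_eq_of_cols
  · show (_ ⊗ₖ Q) *ᵥ (fun ql => u1 m ql.1 * ee ql.2) = _
    rw [kron_mulVec, Matrix.one_mulVec, hQe]
    funext pk
    simp [Vm]
    ring
  · show (_ ⊗ₖ Q) *ᵥ (fun ql => u2 m a ql.1 * eb ql.2) = _
    rw [kron_mulVec, Matrix.one_mulVec, hQb]
    funext pk
    simp [Vm]
    ring

set_option maxHeartbeats 1600000 in
lemma tau_rel {n : ℕ} (ac bc γ δ : ℂ) (hac : ac ≠ 0)
    (A B : Matrix (Fin (n-1)) (Fin (n-1)) ℚ)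
    (hA : ∀ i, (∑ j, ((A i j : ℚ) : ℂ)) = bc)
    (hB : ∀ i, (∑ j, ((B i j : ℚ) : ℂ)) = bc)
    (hcard : ((n - 1 : ℕ) : ℂ) = ac)
    (G G2 : Matrix (Fin 4) (Fin 4) ℂ)
    (hGe : G *ᵥ ee = γ • eb) (hG2e : G2 *ᵥ ee = (-γ) • eb)
    (hGb : G *ᵥ eb = δ • ee) (hG2b : G2 *ᵥ eb = (-δ) • ee) :
    ((Ahat1 A).map ((↑·) : ℚ → ℂ) ⊗ₖ G + (Ahat2 B).map ((↑·) : ℚ → ℂ) ⊗ₖ G2) * Vm (n-1) ac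
      = Vm (n-1) ac * !![0, -δ; γ * ac, 0] := by
  apply mul_eq_of_cols
  · show (_ + _) *ᵥ (fun ql : (Fin 1 ⊕ Fin (n-1)) × Fin 4 => u1 (n-1) ql.1 * ee ql.2) = _
    rw [Matrix.add_mulVec, kron_mulVec, kron_mulVec, A1u1 A, A2u1 B, hGe, hG2e]
    funext pk
    rcases pk with ⟨p | p, k⟩
    all_goals try simp [Vm, u1, u2]
    all_goals try field_simp
    all_goals try ring
  · show (_ + _) *ᵥ (fun ql : (Fin 1 ⊕ Fin (n-1)) × Fin 4 => u2 (n-1) ac ql.1 * eb ql.2) = _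
    rw [Matrix.add_mulVec, kron_mulVec, kron_mulVec, A1u2 A ac bc hcard hA,
      A2u2 B ac bc hB, hGb, hG2b]
    funext pk
    rcases pk with ⟨p | p, k⟩
    all_goals try simp [Vm, u1, u2, mul_inv_cancel₀ hac]
    all_goals try field_simp
    all_goals try ring

section Brute

lemma sxe : (xD.map ((↑·) : ℚ → ℂ)) *ᵥ ee = (I:ℂ) • ee := by
  funext k; fin_cases k <;> simp [xD, yD, ee, eb, mulVec, dotProduct, Matrix.mul_apply,
    Fin.sum_univ_four, Matrix.map_apply, pow_succ, pow_zero]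
lemma sxb : (xD.map ((↑·) : ℚ → ℂ)) *ᵥ eb = (-I:ℂ) • eb := by
  funext k; fin_cases k <;> simp [xD, yD, ee, eb, mulVec, dotProduct, Matrix.mul_apply,
    Fin.sum_univ_four, Matrix.map_apply, pow_succ, pow_zero]
lemma sx2e : ((xD^2).map ((↑·) : ℚ → ℂ)) *ᵥ ee = ((-1:ℂ)) • ee := by
  funext k; fin_cases k <;> simp [xD, yD, ee, eb, mulVec, dotProduct, Matrix.mul_apply,
    Fin.sum_univ_four, Matrix.map_apply, pow_succ, pow_zero]
lemma sx2b : ((xD^2).map ((↑·) : ℚ → ℂ)) *ᵥ eb = ((-1:ℂ)) • eb := by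
  funext k; fin_cases k <;> simp [xD, yD, ee, eb, mulVec, dotProduct, Matrix.mul_apply,
    Fin.sum_univ_four, Matrix.map_apply, pow_succ, pow_zero]
lemma sx3e : ((xD^3).map ((↑·) : ℚ → ℂ)) *ᵥ ee = (-I:ℂ) • ee := by
  funext k; fin_cases k <;> simp [xD, yD, ee, eb, mulVec, dotProduct, Matrix.mul_apply,
    Fin.sum_univ_four, Matrix.map_apply, pow_succ, pow_zero]
lemma sx3b : ((xD^3).map ((↑·) : ℚ → ℂ)) *ᵥ eb = (I:ℂ) • eb := by
  funext k; fin_cases k <;> simp [xD, yD, ee, eb, mulVec, dotProduct, Matrix.mul_apply,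
    Fin.sum_univ_four, Matrix.map_apply, pow_succ, pow_zero]

lemma ty_e : (yD.map ((↑·) : ℚ → ℂ)) *ᵥ ee = (1:ℂ) • eb := by
  funext k; fin_cases k <;> simp [xD, yD, ee, eb, mulVec, dotProduct, Matrix.mul_apply,
    Fin.sum_univ_four, Matrix.map_apply, pow_succ, pow_zero]
lemma ty_e2 : ((yD*xD^2).map ((↑·) : ℚ → ℂ)) *ᵥ ee = (-(1:ℂ)) • eb := by
  funext k; fin_cases k <;> simp [xD, yD, ee, eb, mulVec, dotProduct, Matrix.mul_apply,
    Fin.sum_univ_four, Matrix.map_apply, pow_succ, pow_zero]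
lemma ty_b : (yD.map ((↑·) : ℚ → ℂ)) *ᵥ eb = (1:ℂ) • ee := by
  funext k; fin_cases k <;> simp [xD, yD, ee, eb, mulVec, dotProduct, Matrix.mul_apply,
    Fin.sum_univ_four, Matrix.map_apply, pow_succ, pow_zero]
lemma ty_b2 : ((yD*xD^2).map ((↑·) : ℚ → ℂ)) *ᵥ eb = (-(1:ℂ)) • ee := by
  funext k; fin_cases k <;> simp [xD, yD, ee, eb, mulVec, dotProduct, Matrix.mul_apply,
    Fin.sum_univ_four, Matrix.map_apply, pow_succ, pow_zero]

lemma t1_e : ((xD*yD).map ((↑·) : ℚ → ℂ)) *ᵥ ee = (-I:ℂ) • eb := by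
  funext k; fin_cases k <;> simp [xD, yD, ee, eb, mulVec, dotProduct, Matrix.mul_apply,
    Fin.sum_univ_four, Matrix.map_apply, pow_succ, pow_zero]
lemma t1_e2 : (((xD*yD)*xD^2).map ((↑·) : ℚ → ℂ)) *ᵥ ee = (-(-I:ℂ)) • eb := by
  funext k; fin_cases k <;> simp [xD, yD, ee, eb, mulVec, dotProduct, Matrix.mul_apply,
    Fin.sum_univ_four, Matrix.map_apply, pow_succ, pow_zero]
lemma t1_b : ((xD*yD).map ((↑·) : ℚ → ℂ)) *ᵥ eb = (I:ℂ) • ee := by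
  funext k; fin_cases k <;> simp [xD, yD, ee, eb, mulVec, dotProduct, Matrix.mul_apply,
    Fin.sum_univ_four, Matrix.map_apply, pow_succ, pow_zero]
lemma t1_b2 : (((xD*yD)*xD^2).map ((↑·) : ℚ → ℂ)) *ᵥ eb = (-(I:ℂ)) • ee := by
  funext k; fin_cases k <;> simp [xD, yD, ee, eb, mulVec, dotProduct, Matrix.mul_apply,
    Fin.sum_univ_four, Matrix.map_apply, pow_succ, pow_zero]

lemma t2_e : ((xD^2*yD).map ((↑·) : ℚ → ℂ)) *ᵥ ee = (-1:ℂ) • eb := by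
  funext k; fin_cases k <;> simp [xD, yD, ee, eb, mulVec, dotProduct, Matrix.mul_apply,
    Fin.sum_univ_four, Matrix.map_apply, pow_succ, pow_zero]
lemma t2_e2 : (((xD^2*yD)*xD^2).map ((↑·) : ℚ → ℂ)) *ᵥ ee = (-(-1:ℂ)) • eb := by
  funext k; fin_cases k <;> simp [xD, yD, ee, eb, mulVec, dotProduct, Matrix.mul_apply,
    Fin.sum_univ_four, Matrix.map_apply, pow_succ, pow_zero]
lemma t2_b : ((xD^2*yD).map ((↑·) : ℚ → ℂ)) *ᵥ eb = (-1:ℂ) • ee := by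
  funext k; fin_cases k <;> simp [xD, yD, ee, eb, mulVec, dotProduct, Matrix.mul_apply,
    Fin.sum_univ_four, Matrix.map_apply, pow_succ, pow_zero]
lemma t2_b2 : (((xD^2*yD)*xD^2).map ((↑·) : ℚ → ℂ)) *ᵥ eb = (-(-1:ℂ)) • ee := by
  funext k; fin_cases k <;> simp [xD, yD, ee, eb, mulVec, dotProduct, Matrix.mul_apply,
    Fin.sum_univ_four, Matrix.map_apply, pow_succ, pow_zero]

lemma t3_e : ((xD^3*yD).map ((↑·) : ℚ → ℂ)) *ᵥ ee = (I:ℂ) • eb := by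
  funext k; fin_cases k <;> simp [xD, yD, ee, eb, mulVec, dotProduct, Matrix.mul_apply,
    Fin.sum_univ_four, Matrix.map_apply, pow_succ, pow_zero]
lemma t3_e2 : (((xD^3*yD)*xD^2).map ((↑·) : ℚ → ℂ)) *ᵥ ee = (-(I:ℂ)) • eb := by
  funext k; fin_cases k <;> simp [xD, yD, ee, eb, mulVec, dotProduct, Matrix.mul_apply,
    Fin.sum_univ_four, Matrix.map_apply, pow_succ, pow_zero]
lemma t3_b : ((xD^3*yD).map ((↑·) : ℚ → ℂ)) *ᵥ eb = (-I:ℂ) • ee := by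
  funext k; fin_cases k <;> simp [xD, yD, ee, eb, mulVec, dotProduct, Matrix.mul_apply,
    Fin.sum_univ_four, Matrix.map_apply, pow_succ, pow_zero]
lemma t3_b2 : (((xD^3*yD)*xD^2).map ((↑·) : ℚ → ℂ)) *ᵥ eb = (-(-I:ℂ)) • ee := by
  funext k; fin_cases k <;> simp [xD, yD, ee, eb, mulVec, dotProduct, Matrix.mul_apply,
    Fin.sum_univ_four, Matrix.map_apply, pow_succ, pow_zero]

end Brute

end St17
end St17Aux

set_option maxHeartbeats 1600000 in
theorem stmt_17 (n : ℕ) (hn : 4 ≤ n) (a b : ℚ)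
    (ha : a = (n : ℚ) - 1) (hb : b = ((n : ℚ) - 2) / 2)
    (A₁ : Matrix (Fin (n - 1)) (Fin (n - 1)) ℚ)
    (h01 : ∀ i j, A₁ i j = 0 ∨ A₁ i j = 1)
    (hdiag : ∀ i, A₁ i i = 0)
    (hns : A₁ ≠ A₁ᵀ)
    (hsum : A₁ + A₁ᵀ = (Matrix.of fun _ _ => (1 : ℚ)) - 1)
    (hrow : ∀ i, ∑ j, A₁ i j = b)
    (h11 : A₁ * A₁ = ((b - 1) / 2) • A₁ + ((b + 1) / 2) • A₁ᵀ)
    (h22 : A₁ᵀ * A₁ᵀ = ((b + 1) / 2) • A₁ + ((b - 1) / 2) • A₁ᵀ)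
    (h12 : A₁ * A₁ᵀ = b • (1 : Matrix (Fin (n - 1)) (Fin (n - 1)) ℚ)
      + ((b - 1) / 2) • A₁ + ((b - 1) / 2) • A₁ᵀ)
    (h21 : A₁ᵀ * A₁ = b • (1 : Matrix (Fin (n - 1)) (Fin (n - 1)) ℚ)
      + ((b - 1) / 2) • A₁ + ((b - 1) / 2) • A₁ᵀ) :
    ∀ S : Set (Matrix ((Fin 1 ⊕ Fin (n - 1)) × Fin 4) ((Fin 1 ⊕ Fin (n - 1)) × Fin 4) ℂ),
      S = {(sig n 1).map ((↑·) : ℚ → ℂ), (sig n xD).map ((↑·) : ℚ → ℂ),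
        (sig n (xD ^ 2)).map ((↑·) : ℚ → ℂ), (sig n (xD ^ 3)).map ((↑·) : ℚ → ℂ),
        (tau A₁ yD).map ((↑·) : ℚ → ℂ), (tau A₁ (xD * yD)).map ((↑·) : ℚ → ℂ),
        (tau A₁ (xD ^ 2 * yD)).map ((↑·) : ℚ → ℂ), (tau A₁ (xD ^ 3 * yD)).map ((↑·) : ℚ → ℂ)} →
      ∃ T : Algebra.adjoin ℂ S →ₐ[ℂ] Matrix (Fin 2) (Fin 2) ℂ,
        Function.Surjective T ∧
        (∀ u : Algebra.adjoin ℂ S, (u : Matrix ((Fin 1 ⊕ Fin (n - 1)) × Fin 4) ((Fin 1 ⊕ Fin (n - 1)) × Fin 4) ℂ) = (sig n 1).map ((↑·) : ℚ → ℂ) → T u = 1) ∧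
        (∀ u : Algebra.adjoin ℂ S, (u : Matrix ((Fin 1 ⊕ Fin (n - 1)) × Fin 4) ((Fin 1 ⊕ Fin (n - 1)) × Fin 4) ℂ) = (sig n xD).map ((↑·) : ℚ → ℂ) →
          T u = !![Complex.I, 0; 0, -Complex.I]) ∧
        (∀ u : Algebra.adjoin ℂ S, (u : Matrix ((Fin 1 ⊕ Fin (n - 1)) × Fin 4) ((Fin 1 ⊕ Fin (n - 1)) × Fin 4) ℂ) = (tau A₁ yD).map ((↑·) : ℚ → ℂ) →
          T u = !![0, -1; (a : ℂ), 0]) := by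
  intro S hS
  have hn1 : 1 ≤ n := by omega
  have haq : a ≠ 0 := by
    have h4 : (4:ℚ) ≤ (n:ℚ) := by exact_mod_cast hn
    rw [ha]; intro h; rw [sub_eq_zero] at h; rw [h] at h4; norm_num at h4
  have hac : (a : ℂ) ≠ 0 := by exact_mod_cast haq
  have hcard : ((n - 1 : ℕ) : ℂ) = (a : ℂ) := by
    rw [ha]; push_cast [Nat.cast_sub hn1]; ring
  have hrowC : ∀ i, (∑ j, ((A₁ i j : ℚ) : ℂ)) = (b : ℂ) := by
    intro i; rw [← hrow i]; push_cast; rfl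
  have hcolQ : ∀ i, (∑ j, A₁ᵀ i j) = b := by
    intro i
    have h2 : ∀ j, A₁ i j + A₁ᵀ i j = 1 - (1 : Matrix (Fin (n-1)) (Fin (n-1)) ℚ) i j := by
      intro j
      have h3 := congrFun (congrFun hsum i) j
      simpa [Matrix.add_apply, Matrix.sub_apply] using h3
    have h1 : ∑ j, (A₁ i j + A₁ᵀ i j) = ((n-1 : ℕ) : ℚ) - 1 := by
      rw [Finset.sum_congr rfl fun j _ => h2 j]
      simp [Finset.sum_sub_distrib, Matrix.one_apply, Finset.sum_ite_eq]
    rw [Finset.sum_add_distrib, hrow i] at h1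
    have hb2 : ((n-1 : ℕ) : ℚ) = (n:ℚ) - 1 := by push_cast [Nat.cast_sub hn1]; ring
    rw [hb2] at h1
    rw [hb]
    have h4 : (4:ℚ) ≤ (n:ℚ) := by exact_mod_cast hn
    rw [hb] at h1
    linarith
  have hcolC : ∀ i, (∑ j, ((A₁ᵀ i j : ℚ) : ℂ)) = (b : ℂ) := by
    intro i; rw [← hcolQ i]; push_cast; rfl
  -- map decompositions
  have sig_map : ∀ g : Matrix (Fin 4) (Fin 4) ℚ, (sig n g).map ((↑·) : ℚ → ℂ)
      = (1 : Matrix (Fin 1 ⊕ Fin (n-1)) (Fin 1 ⊕ Fin (n-1)) ℂ) ⊗ₖ g.map ((↑·) : ℚ → ℂ) := by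
    intro g
    have hone : (1 : Matrix (Fin 1 ⊕ Fin (n-1)) (Fin 1 ⊕ Fin (n-1)) ℚ).map ((↑·) : ℚ → ℂ) = 1 := by
      ext p q
      by_cases h : p = q <;> simp [Matrix.one_apply, h]
    rw [sig, St17.map_kron, hone]
  have tau_map : ∀ g : Matrix (Fin 4) (Fin 4) ℚ, (tau A₁ g).map ((↑·) : ℚ → ℂ)
      = (Ahat1 A₁).map ((↑·) : ℚ → ℂ) ⊗ₖ g.map ((↑·) : ℚ → ℂ)
        + (Ahat2 A₁ᵀ).map ((↑·) : ℚ → ℂ) ⊗ₖ (g * xD^2).map ((↑·) : ℚ → ℂ) := by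
    intro g
    rw [tau]
    ext pk ql
    simp [Matrix.map_apply, Matrix.add_apply, kroneckerMap_apply]
  -- the relations
  have hsig1 : (sig n 1).map ((↑·) : ℚ → ℂ)
      = (1 : Matrix ((Fin 1 ⊕ Fin (n-1)) × Fin 4) ((Fin 1 ⊕ Fin (n-1)) × Fin 4) ℂ) := by
    rw [sig_map]
    have h5 : (1 : Matrix (Fin 4) (Fin 4) ℚ).map ((↑·) : ℚ → ℂ) = 1 := by
      ext i j; simp [Matrix.one_apply, apply_ite]
    rw [h5, Matrix.one_kronecker_one]
  have rel1 : (sig n 1).map ((↑·) : ℚ → ℂ) * St17.Vm (n-1) (a:ℂ)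
      = St17.Vm (n-1) (a:ℂ) * (1 : Matrix (Fin 2) (Fin 2) ℂ) := by
    rw [hsig1, Matrix.one_mul, Matrix.mul_one]
  have relx : (sig n xD).map ((↑·) : ℚ → ℂ) * St17.Vm (n-1) (a:ℂ)
      = St17.Vm (n-1) (a:ℂ) * !![Complex.I, 0; 0, -Complex.I] := by
    rw [sig_map]; exact St17.sig_rel _ _ _ _ St17.sxe St17.sxb
  have relx2 : (sig n (xD^2)).map ((↑·) : ℚ → ℂ) * St17.Vm (n-1) (a:ℂ)
      = St17.Vm (n-1) (a:ℂ) * !![(-1:ℂ), 0; 0, -1] := by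
    rw [sig_map]; exact St17.sig_rel _ _ _ _ St17.sx2e St17.sx2b
  have relx3 : (sig n (xD^3)).map ((↑·) : ℚ → ℂ) * St17.Vm (n-1) (a:ℂ)
      = St17.Vm (n-1) (a:ℂ) * !![(-Complex.I), 0; 0, Complex.I] := by
    rw [sig_map]; exact St17.sig_rel _ _ _ _ St17.sx3e St17.sx3b
  have rely0 : (tau A₁ yD).map ((↑·) : ℚ → ℂ) * St17.Vm (n-1) (a:ℂ)
      = St17.Vm (n-1) (a:ℂ) * !![0, -(1:ℂ); 1 * (a:ℂ), 0] := by
    rw [tau_map]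
    exact St17.tau_rel (a:ℂ) (b:ℂ) 1 1 hac A₁ A₁ᵀ hrowC hcolC hcard _ _
      St17.ty_e St17.ty_e2 St17.ty_b St17.ty_b2
  have rely : (tau A₁ yD).map ((↑·) : ℚ → ℂ) * St17.Vm (n-1) (a:ℂ)
      = St17.Vm (n-1) (a:ℂ) * !![0, -1; (a:ℂ), 0] := by
    rw [rely0]; norm_num
  have relt1 : (tau A₁ (xD * yD)).map ((↑·) : ℚ → ℂ) * St17.Vm (n-1) (a:ℂ)
      = St17.Vm (n-1) (a:ℂ) * !![0, -(Complex.I); (-Complex.I) * (a:ℂ), 0] := by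
    rw [tau_map]
    exact St17.tau_rel (a:ℂ) (b:ℂ) (-Complex.I) Complex.I hac A₁ A₁ᵀ hrowC hcolC hcard _ _
      St17.t1_e St17.t1_e2 St17.t1_b St17.t1_b2
  have relt2 : (tau A₁ (xD^2 * yD)).map ((↑·) : ℚ → ℂ) * St17.Vm (n-1) (a:ℂ)
      = St17.Vm (n-1) (a:ℂ) * !![0, -(-1:ℂ); (-1:ℂ) * (a:ℂ), 0] := by
    rw [tau_map]
    exact St17.tau_rel (a:ℂ) (b:ℂ) (-1) (-1) hac A₁ A₁ᵀ hrowC hcolC hcard _ _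
      St17.t2_e St17.t2_e2 St17.t2_b St17.t2_b2
  have relt3 : (tau A₁ (xD^3 * yD)).map ((↑·) : ℚ → ℂ) * St17.Vm (n-1) (a:ℂ)
      = St17.Vm (n-1) (a:ℂ) * !![0, -(-Complex.I); Complex.I * (a:ℂ), 0] := by
    rw [tau_map]
    exact St17.tau_rel (a:ℂ) (b:ℂ) Complex.I (-Complex.I) hac A₁ A₁ᵀ hrowC hcolC hcard _ _
      St17.t3_e St17.t3_e2 St17.t3_b St17.t3_b2
  have hSrel : ∀ M ∈ S, ∃ ρ : Matrix (Fin 2) (Fin 2) ℂ, M * St17.Vm (n-1) (a:ℂ) = St17.Vm (n-1) (a:ℂ) * ρ := by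
    intro M hM
    rw [hS] at hM
    simp only [Set.mem_insert_iff, Set.mem_singleton_iff] at hM
    rcases hM with rfl|rfl|rfl|rfl|rfl|rfl|rfl|rfl
    · exact ⟨_, rel1⟩
    · exact ⟨_, relx⟩
    · exact ⟨_, relx2⟩
    · exact ⟨_, relx3⟩
    · exact ⟨_, rely⟩
    · exact ⟨_, relt1⟩
    · exact ⟨_, relt2⟩
    · exact ⟨_, relt3⟩
  obtain ⟨T, hT⟩ := St17.buildHom S (St17.Vm (n-1) (a:ℂ))
    (St17.Wm (n-1) (a:ℂ) ⟨0, by omega⟩) (St17.WV _ _ hac _) hSrel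
  have Tval : ∀ (M : Matrix ((Fin 1 ⊕ Fin (n-1)) × Fin 4) ((Fin 1 ⊕ Fin (n-1)) × Fin 4) ℂ)
      (ρ : Matrix (Fin 2) (Fin 2) ℂ),
      M * St17.Vm (n-1) (a:ℂ) = St17.Vm (n-1) (a:ℂ) * ρ →
      ∀ u : Algebra.adjoin ℂ S, (u : Matrix _ _ ℂ) = M → T u = ρ := by
    intro M ρ h u hu
    rw [hT u, hu, Matrix.mul_assoc, h, ← Matrix.mul_assoc, St17.WV _ _ hac _, Matrix.one_mul]
  have mem_x : (sig n xD).map ((↑·) : ℚ → ℂ) ∈ S := by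
    rw [hS]
    simp only [Set.mem_insert_iff, Set.mem_singleton_iff]
    tauto
  have mem_y : (tau A₁ yD).map ((↑·) : ℚ → ℂ) ∈ S := by
    rw [hS]
    simp only [Set.mem_insert_iff, Set.mem_singleton_iff]
    tauto
  have hTσ : T ⟨_, Algebra.subset_adjoin mem_x⟩ = !![Complex.I, 0; 0, -Complex.I] :=
    Tval _ _ relx _ rfl
  have hTτ : T ⟨_, Algebra.subset_adjoin mem_y⟩ = !![0, -1; (a:ℂ), 0] :=
    Tval _ _ rely _ rfl
  have hsurj : Function.Surjective T := by
    intro M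
    set σe : Algebra.adjoin ℂ S := ⟨_, Algebra.subset_adjoin mem_x⟩ with hσe
    set τe : Algebra.adjoin ℂ S := ⟨_, Algebra.subset_adjoin mem_y⟩ with hτe
    set p : Algebra.adjoin ℂ S := (2⁻¹ : ℂ) • 1 - (Complex.I / 2) • σe with hp
    have hTp : T p = !![1, 0; 0, 0] := by
      rw [hp]
      simp only [_root_.map_sub, _root_.map_smul, _root_.map_one, hTσ]
      ext i j
      fin_cases i <;> fin_cases j <;>
        simp [Matrix.smul_apply, Matrix.one_apply, Matrix.sub_apply]
      all_goals ring_nf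
      all_goals simp [Complex.I_sq]
      all_goals ring_nf
    refine ⟨M 0 0 • p + M 0 1 • (-(p * τe)) + M 1 0 • ((a:ℂ)⁻¹ • (τe * p))
      + M 1 1 • (1 - p), ?_⟩
    simp only [_root_.map_add, _root_.map_smul, _root_.map_neg, _root_.map_mul,
      _root_.map_sub, _root_.map_one, hTp, hTτ]
    ext i j
    fin_cases i <;> fin_cases j <;>
      simp [Matrix.mul_apply, Fin.sum_univ_two, Matrix.one_apply, Matrix.smul_apply,
        Matrix.add_apply, Matrix.sub_apply, Matrix.neg_apply]
    all_goals field_simp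
  refine ⟨T, hsurj, ?_, ?_, ?_⟩
  · intro u hu; exact Tval _ _ rel1 u hu
  · intro u hu; exact Tval _ _ relx u hu
  · intro u hu; exact Tval _ _ rely u hu
end
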